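/- Let a finite set of clients, each with a positive weight, and a finite set of k facilities be given, where each client i has a (possibly empty) set N(i) of accessible facilities. A feasible weight distribution assigns to each client with N(i) nonempty a splitting of her full weight among facilities in N(i), and assigns zero to clients with N(i) empty. Define the load of facility j as the total weight assigned to it. Then there exists a feasible weight distribution σ minimizing the sum of squares of facility loads, and any such minimizer is a client equilibrium: no client i places positive weight on a facility j in N(i) while some other facility in N(i) has strictly smaller load. -/
import Mathlib


open Finset

/-- Load of facility `j` under weight distribution `σ`. -/
def load {n k : ℕ} (σ : Fin n → Fin k → ℝ) (j : Fin k) : ℝ := ∑ i, σ i j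

/-- A feasible client weight distribution: nonnegative, supported on accessible
facilities, and clients with a nonempty accessible set distribute their full weight. -/
def Feasible {n k : ℕ} (w : Fin n → ℝ) (N : Fin n → Finset (Fin k))
    (σ : Fin n → Fin k → ℝ) : Prop :=
  (∀ i j, 0 ≤ σ i j) ∧
  (∀ i j, j ∉ N i → σ i j = 0) ∧
  (∀ i, (N i).Nonempty → ∑ j ∈ N i, σ i j = w i)

/-- Client equilibrium: no client puts positive weight on a facility while a
strictly less loaded accessible facility exists. -/
def ClientEq {n k : ℕ} (w : Fin n → ℝ) (N : Fin n → Finset (Fin k))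
    (σ : Fin n → Fin k → ℝ) : Prop :=
  Feasible w N σ ∧
  ∀ i : Fin n, ∀ j ∈ N i, ∀ j' ∈ N i, 0 < σ i j → load σ j ≤ load σ j'

lemma feasible_exists (n k : ℕ) (w : Fin n → ℝ) (hw : ∀ i, 0 < w i)
    (N : Fin n → Finset (Fin k)) :
    ∃ σ : Fin n → Fin k → ℝ, Feasible w N σ := by
  classical
  refine ⟨fun i j => if h : (N i).Nonempty then (if j = h.choose then w i else 0) else 0,
    ?_, ?_, ?_⟩
  · intro i j
    by_cases h : (N i).Nonempty
    · simp only [h, dif_pos]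
      split
      · exact (hw i).le
      · exact le_refl 0
    · simp [h]
  · intro i j hj
    by_cases h : (N i).Nonempty
    · simp only [h, dif_pos]
      have : j ≠ h.choose := fun he => hj (he ▸ h.choose_spec)
      simp [this]
    · simp [h]
  · intro i h
    simp only [h, dif_pos]
    rw [Finset.sum_ite_eq' (N i) h.choose (fun _ => w i)]
    simp [h.choose_spec]

theorem minimizer_exists_and_is_client_equilibrium (n k : ℕ)
    (w : Fin n → ℝ) (hw : ∀ i, 0 < w i) (N : Fin n → Finset (Fin k)) :
    (∃ σ : Fin n → Fin k → ℝ, Feasible w N σ ∧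
      ∀ σ' : Fin n → Fin k → ℝ, Feasible w N σ' →
        ∑ j, (load σ j) ^ 2 ≤ ∑ j, (load σ' j) ^ 2) ∧
    (∀ σ : Fin n → Fin k → ℝ, Feasible w N σ →
      (∀ σ' : Fin n → Fin k → ℝ, Feasible w N σ' →
        ∑ j, (load σ j) ^ 2 ≤ ∑ j, (load σ' j) ^ 2) →
      ClientEq w N σ) := by
  classical
  constructor
  · -- existence of a minimizer
    set S : Set (Fin n → Fin k → ℝ) := {σ | Feasible w N σ} with hS
    have hne : S.Nonempty := feasible_exists n k w hw N
    have hsub : S ⊆ Set.pi Set.univ fun i => Set.pi Set.univ fun _ : Fin k =>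
        Set.Icc (0:ℝ) (w i) := by
      rintro σ ⟨h1, h2, h3⟩ i _ j _
      refine ⟨h1 i j, ?_⟩
      by_cases hj : j ∈ N i
      · calc σ i j ≤ ∑ j' ∈ N i, σ i j' :=
            Finset.single_le_sum (fun j' _ => h1 i j') hj
          _ = w i := h3 i ⟨j, hj⟩
      · rw [h2 i j hj]; exact (hw i).le
    have hCbig : IsCompact (Set.pi Set.univ fun i => Set.pi Set.univ fun _ : Fin k =>
        Set.Icc (0:ℝ) (w i)) :=
      isCompact_univ_pi fun i => isCompact_univ_pi fun _ => isCompact_Icc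
    have hclosed : IsClosed S := by
      have e1 : IsClosed {σ : Fin n → Fin k → ℝ | ∀ i j, 0 ≤ σ i j} := by
        have : {σ : Fin n → Fin k → ℝ | ∀ i j, 0 ≤ σ i j}
            = ⋂ i, ⋂ j, {σ | 0 ≤ σ i j} := by ext; simp
        rw [this]
        exact isClosed_iInter fun i => isClosed_iInter fun j =>
          isClosed_le continuous_const ((continuous_apply j).comp (continuous_apply i))
      have e2 : IsClosed {σ : Fin n → Fin k → ℝ | ∀ i j, j ∉ N i → σ i j = 0} := by
        have : {σ : Fin n → Fin k → ℝ | ∀ i j, j ∉ N i → σ i j = 0}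
            = ⋂ i, ⋂ j, {σ | j ∉ N i → σ i j = 0} := by ext; simp
        rw [this]
        refine isClosed_iInter fun i => isClosed_iInter fun j => ?_
        by_cases hj : j ∈ N i
        · simp [hj]
        · have : {σ : Fin n → Fin k → ℝ | j ∉ N i → σ i j = 0}
              = {σ | σ i j = 0} := by ext σ; simp [hj]
          rw [this]
          exact isClosed_eq ((continuous_apply j).comp (continuous_apply i))
            continuous_const
      have e3 : IsClosed {σ : Fin n → Fin k → ℝ |
          ∀ i, (N i).Nonempty → ∑ j ∈ N i, σ i j = w i} := by
        have : {σ : Fin n → Fin k → ℝ | ∀ i, (N i).Nonempty → ∑ j ∈ N i, σ i j = w i}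
            = ⋂ i, {σ | (N i).Nonempty → ∑ j ∈ N i, σ i j = w i} := by ext; simp
        rw [this]
        refine isClosed_iInter fun i => ?_
        by_cases hi : (N i).Nonempty
        · have : {σ : Fin n → Fin k → ℝ | (N i).Nonempty → ∑ j ∈ N i, σ i j = w i}
              = {σ | ∑ j ∈ N i, σ i j = w i} := by ext σ; simp [hi]
          rw [this]
          exact isClosed_eq (continuous_finset_sum _ fun j _ =>
            (continuous_apply j).comp (continuous_apply i)) continuous_const
        · simp [hi]
      have : S = {σ : Fin n → Fin k → ℝ | ∀ i j, 0 ≤ σ i j}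
          ∩ ({σ | ∀ i j, j ∉ N i → σ i j = 0}
          ∩ {σ | ∀ i, (N i).Nonempty → ∑ j ∈ N i, σ i j = w i}) := by
        ext σ; simp [hS, Feasible, Set.mem_setOf_eq, and_assoc]
      rw [this]
      exact e1.inter (e2.inter e3)
    have hcomp : IsCompact S := hCbig.of_isClosed_subset hclosed hsub
    have hcont : Continuous fun σ : Fin n → Fin k → ℝ => ∑ j, (load σ j) ^ 2 := by
      refine continuous_finset_sum _ fun j _ => ?_
      exact (continuous_finset_sum _ fun i _ =>
        (continuous_apply j).comp (continuous_apply i)).pow 2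
    obtain ⟨σ, hσS, hmin⟩ := hcomp.exists_isMinOn hne hcont.continuousOn
    exact ⟨σ, hσS, fun σ' hσ' => hmin hσ'⟩
  · -- every minimizer is an equilibrium
    rintro σ hσ hmin
    refine ⟨hσ, ?_⟩
    intro i j hj j' hj' hpos
    by_contra hlt
    push_neg at hlt
    have hjj' : j ≠ j' := by rintro rfl; exact absurd hlt (lt_irrefl _)
    obtain ⟨h1, h2, h3⟩ := hσ
    set ε : ℝ := min (σ i j) ((load σ j - load σ j') / 2) with hε
    have hε0 : 0 < ε := lt_min hpos (by linarith)
    have hεj : ε ≤ σ i j := min_le_left _ _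
    have hεlt : ε < load σ j - load σ j' := lt_of_le_of_lt (min_le_right _ _) (by linarith)
    set δ : Fin k → ℝ := fun j'' => (if j'' = j' then ε else 0) - (if j'' = j then ε else 0)
      with hδ
    set σ' : Fin n → Fin k → ℝ := fun i' j'' => σ i' j'' + (if i' = i then δ j'' else 0)
      with hσ'def
    have hδj : δ j = -ε := by simp [hδ, hjj']
    have hδj' : δ j' = ε := by simp [hδ, hjj'.symm]
    have hδ0 : ∀ j'', j'' ≠ j → j'' ≠ j' → δ j'' = 0 := by
      intro j'' hj1 hj2; simp [hδ, hj1, hj2]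
    have hfeas : Feasible w N σ' := by
      refine ⟨?_, ?_, ?_⟩
      · intro i' j''
        rcases eq_or_ne i' i with rfl | hi
        · by_cases hj1 : j'' = j
          · subst hj1; simp [hσ'def, hδj]; linarith
          · by_cases hj2 : j'' = j'
            · subst hj2; simp [hσ'def, hδj']; linarith [h1 i' j'']
            · simp [hσ'def, hδ0 j'' hj1 hj2]; exact h1 _ j''
        · simp [hσ'def, hi]; exact h1 i' j''
      · intro i' j'' hjn
        rcases eq_or_ne i' i with rfl | hi
        · have hj1 : j'' ≠ j := fun he => hjn (he ▸ hj)
          have hj2 : j'' ≠ j' := fun he => hjn (he ▸ hj')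
          simp [hσ'def, hδ0 j'' hj1 hj2, h2 _ j'' hjn]
        · simp [hσ'def, hi, h2 i' j'' hjn]
      · intro i' hi'
        rcases eq_or_ne i' i with rfl | hi
        · have : ∑ j'' ∈ N i', σ' i' j'' = (∑ j'' ∈ N i', σ i' j'') + ∑ j'' ∈ N i', δ j'' := by
            simp [hσ'def, Finset.sum_add_distrib]
          rw [this, h3 i' hi']
          have hsumδ : ∑ j'' ∈ N i', δ j'' = 0 := by
            simp only [hδ, Finset.sum_sub_distrib]
            rw [Finset.sum_ite_eq' (N i') j' (fun _ => ε),
              Finset.sum_ite_eq' (N i') j (fun _ => ε)]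
            simp [hj, hj']
          rw [hsumδ]; ring
        · have : ∑ j'' ∈ N i', σ' i' j'' = ∑ j'' ∈ N i', σ i' j'' := by
            apply Finset.sum_congr rfl; intro j'' _; simp [hσ'def, hi]
          rw [this]; exact h3 i' hi'
    have hload : ∀ j'', load σ' j'' = load σ j'' + δ j'' := by
      intro j''
      simp only [load, hσ'def, Finset.sum_add_distrib]
      rw [Finset.sum_ite_eq' Finset.univ i (fun _ => δ j'')]
      simp
    have hdiff : ∑ j'', (load σ' j'') ^ 2 - ∑ j'', (load σ j'') ^ 2
        = ((load σ j - ε)^2 - (load σ j)^2) + ((load σ j' + ε)^2 - (load σ j')^2) := by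
      rw [← Finset.sum_sub_distrib]
      have hz : ∀ j'' ∈ Finset.univ, j'' ∉ ({j, j'} : Finset (Fin k)) →
          (load σ' j'') ^ 2 - (load σ j'') ^ 2 = 0 := by
        intro j'' _ hmem
        simp only [Finset.mem_insert, Finset.mem_singleton, not_or] at hmem
        rw [hload, hδ0 j'' hmem.1 hmem.2]; ring
      rw [← Finset.sum_subset (Finset.subset_univ ({j, j'} : Finset (Fin k))) hz]
      rw [Finset.sum_pair hjj']
      rw [hload j, hload j', hδj, hδj']
      ring
    have hneg : ∑ j'', (load σ' j'') ^ 2 < ∑ j'', (load σ j'') ^ 2 := by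
      have : ((load σ j - ε)^2 - (load σ j)^2) + ((load σ j' + ε)^2 - (load σ j')^2)
          = 2 * ε * (ε + load σ j' - load σ j) := by ring
      nlinarith [hdiff, hε0, hεlt]
    exact absurd (hmin σ' hfeas) (not_le.mpr hneg)
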